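/- Theorem 2: Let C = ln(1+√2)/π. The minimum value H* of the Ising Hamiltonian H(S) on the Chimera graph G_r satisfies H* ≤ −(C/(3C+4))·(Σ_{(u,v)∈E}|c_{uv}| + Σ_{u∈V}|d_u|). -/

import Mathlib

open Finset

abbrev ChimeraVertex (r : ℕ) := Fin r × Fin r × Fin 4 × Fin 2

def lowRow {r : ℕ} (i : Fin (r - 1)) : Fin r := ⟨i.val, by have := i.isLt; omega⟩

def highRow {r : ℕ} (i : Fin (r - 1)) : Fin r := ⟨i.val + 1, by have := i.isLt; omega⟩

/-- `S` is a valid spin assignment, i.e. takes values in `{-1, 1}`. -/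
def IsPM {r : ℕ} (S : ChimeraVertex r → ℝ) : Prop := ∀ v, S v = 1 ∨ S v = -1

/-- The Ising Hamiltonian on the Chimera graph `G_r`. -/
def IsingH {r : ℕ} (c0 : Fin (r - 1) → Fin r → Fin 4 → ℝ)
    (c1 : Fin r → Fin (r - 1) → Fin 4 → ℝ)
    (c01 : Fin r → Fin r → Fin 4 → Fin 4 → ℝ)
    (d : ChimeraVertex r → ℝ) (S : ChimeraVertex r → ℝ) : ℝ :=
  (∑ i, ∑ j, ∑ k, c0 i j k * (S (lowRow i, j, k, 0) * S (highRow i, j, k, 0)))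
    + (∑ i, ∑ j, ∑ k, c1 i j k * (S (i, lowRow j, k, 1) * S (i, highRow j, k, 1)))
    + (∑ i, ∑ j, ∑ k0, ∑ k1, c01 i j k0 k1 * (S (i, j, k0, 0) * S (i, j, k1, 1)))
    + (∑ v, d v * S v)


namespace Aux
set_option linter.unusedSectionVars false
variable {α : Type*} [Fintype α] [DecidableEq α]

def eo (f : α → Bool) : Option α → ℝ
  | none => 1
  | some a => if f a then 1 else -1

lemma eo_pm (f : α → Bool) (o : Option α) : eo f o = 1 ∨ eo f o = -1 := by
  cases o with
  | none => left; rfl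
  | some a => by_cases h : f a <;> simp [eo, h]

lemma eo_update_self (f : α → Bool) (a : α) :
    eo (Function.update f a (!f a)) (some a) = -eo f (some a) := by
  by_cases h : f a <;> simp [eo, h]

lemma eo_update_ne (f : α → Bool) (a : α) (o : Option α) (h : o ≠ some a) :
    eo (Function.update f a (!f a)) o = eo f o := by
  cases o with
  | none => rfl
  | some b =>
      have hb : b ≠ a := fun hb => h (by rw [hb])
      simp [eo, Function.update_of_ne hb]

lemma sum_flip_zero (a : α) (F : (α → Bool) → ℝ)
    (hF : ∀ f, F (Function.update f a (!f a)) = -F f) :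
    ∑ f : α → Bool, F f = 0 := by
  have hinv : Function.Involutive (fun f : α → Bool => Function.update f a (!f a)) := by
    intro f
    ext b
    by_cases hb : b = a
    · subst hb; simp
    · simp [Function.update_of_ne hb]
  have := Equiv.sum_comp hinv.toPerm F
  have h2 : ∑ f : α → Bool, F (Function.update f a (!f a)) = ∑ f : α → Bool, F f := this
  rw [Finset.sum_congr rfl (fun f _ => hF f)] at h2
  rw [Finset.sum_neg_distrib] at h2
  linarith

lemma sum_eo_single (a : α) : ∑ f : α → Bool, eo f (some a) = 0 := by
  apply sum_flip_zero a
  intro f; exact eo_update_self f a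

lemma sum_eo_mul (o1 o2 : Option α) :
    ∑ f : α → Bool, eo f o1 * eo f o2 =
      if o1 = o2 then (Fintype.card (α → Bool) : ℝ) else 0 := by
  by_cases h : o1 = o2
  · subst h
    rw [if_pos rfl]
    have : ∀ f : α → Bool, eo f o1 * eo f o1 = 1 := by
      intro f; rcases eo_pm f o1 with h | h <;> rw [h] <;> norm_num
    rw [Finset.sum_congr rfl (fun f _ => this f)]
    simp [Finset.card_univ]
  · rw [if_neg h]
    rcases o1 with _ | a
    · rcases o2 with _ | b
      · exact absurd rfl h
      · simp only [eo, one_mul]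
        exact sum_eo_single b
    · apply sum_flip_zero a
      intro f
      rw [eo_update_self, eo_update_ne f a o2 (fun hh => h (by rw [hh]))]
      ring

lemma sum_eo (o : Option α) :
    ∑ f : α → Bool, eo f o = if o = none then (Fintype.card (α → Bool) : ℝ) else 0 := by
  rcases o with _ | a
  · simp [eo, Finset.card_univ]
  · simp only [reduceCtorEq, if_false]
    exact sum_eo_single a
end Aux

namespace Strat
open Aux
set_option linter.unusedSectionVars false

variable {r : ℕ}

/-- correlation factor -/
def corr (p : ChimeraVertex r → Option (ChimeraVertex r)) (σ : ChimeraVertex r → ℝ)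
    (u v : ChimeraVertex r) : ℝ :=
  if p u = p v then σ u * σ v else 0

/-- field factor -/
def fld (p : ChimeraVertex r → Option (ChimeraVertex r)) (σ : ChimeraVertex r → ℝ)
    (v : ChimeraVertex r) : ℝ :=
  if p v = none then σ v else 0

/-- the strategy assignment -/
def SA (p : ChimeraVertex r → Option (ChimeraVertex r)) (σ : ChimeraVertex r → ℝ)
    (f : ChimeraVertex r → Bool) (v : ChimeraVertex r) : ℝ :=
  eo f (p v) * σ v

variable (p : ChimeraVertex r → Option (ChimeraVertex r)) (σ : ChimeraVertex r → ℝ)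

lemma SA_pm (hσ : ∀ v, σ v = 1 ∨ σ v = -1) (f : ChimeraVertex r → Bool) :
    IsPM (SA p σ f) := by
  intro v
  unfold SA
  rcases eo_pm f (p v) with h | h <;> rcases hσ v with h2 | h2 <;> rw [h, h2] <;> norm_num

abbrev N (r : ℕ) : ℕ := Fintype.card (ChimeraVertex r → Bool)

lemma key_edge (w : ℝ) (u v : ChimeraVertex r) :
    ∑ f : ChimeraVertex r → Bool, w * (SA p σ f u * SA p σ f v)
      = (N r : ℝ) * (w * corr p σ u v) := by
  have h1 : ∀ f : ChimeraVertex r → Bool,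
      w * (SA p σ f u * SA p σ f v) = (w * (σ u * σ v)) * (eo f (p u) * eo f (p v)) := by
    intro f; unfold SA; ring
  rw [Finset.sum_congr rfl (fun f _ => h1 f), ← Finset.mul_sum, sum_eo_mul]
  unfold corr
  by_cases h : p u = p v
  · rw [if_pos h, if_pos h]; ring
  · rw [if_neg h, if_neg h]; ring

lemma key_fld (w : ℝ) (v : ChimeraVertex r) :
    ∑ f : ChimeraVertex r → Bool, w * SA p σ f v = (N r : ℝ) * (w * fld p σ v) := by
  have h1 : ∀ f : ChimeraVertex r → Bool,
      w * SA p σ f v = (w * σ v) * eo f (p v) := by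
    intro f; unfold SA; ring
  rw [Finset.sum_congr rfl (fun f _ => h1 f), ← Finset.mul_sum, sum_eo]
  unfold fld
  by_cases h : p v = none
  · rw [if_pos h, if_pos h]; ring
  · rw [if_neg h, if_neg h]; ring

lemma swap3 {a b c : Type*} [Fintype a] [Fintype b] [Fintype c]
    (w : a → b → c → ℝ) (u v : a → b → c → ChimeraVertex r) :
    ∑ f : ChimeraVertex r → Bool, ∑ i, ∑ j, ∑ k,
        w i j k * (SA p σ f (u i j k) * SA p σ f (v i j k))
      = (N r : ℝ) * ∑ i, ∑ j, ∑ k, w i j k * corr p σ (u i j k) (v i j k) := by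
  rw [Finset.sum_comm, Finset.mul_sum]
  refine Finset.sum_congr rfl fun i _ => ?_
  rw [Finset.sum_comm, Finset.mul_sum]
  refine Finset.sum_congr rfl fun j _ => ?_
  rw [Finset.sum_comm, Finset.mul_sum]
  refine Finset.sum_congr rfl fun k _ => ?_
  exact key_edge p σ _ _ _

lemma swap4 {a b c e : Type*} [Fintype a] [Fintype b] [Fintype c] [Fintype e]
    (w : a → b → c → e → ℝ) (u v : a → b → c → e → ChimeraVertex r) :
    ∑ f : ChimeraVertex r → Bool, ∑ i, ∑ j, ∑ k, ∑ m,
        w i j k m * (SA p σ f (u i j k m) * SA p σ f (v i j k m))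
      = (N r : ℝ) * ∑ i, ∑ j, ∑ k, ∑ m, w i j k m * corr p σ (u i j k m) (v i j k m) := by
  rw [Finset.sum_comm, Finset.mul_sum]
  refine Finset.sum_congr rfl fun i _ => ?_
  rw [Finset.sum_comm, Finset.mul_sum]
  refine Finset.sum_congr rfl fun j _ => ?_
  rw [Finset.sum_comm, Finset.mul_sum]
  refine Finset.sum_congr rfl fun k _ => ?_
  rw [Finset.sum_comm, Finset.mul_sum]
  refine Finset.sum_congr rfl fun m _ => ?_
  exact key_edge p σ _ _ _

lemma swap1 (w : ChimeraVertex r → ℝ) :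
    ∑ f : ChimeraVertex r → Bool, ∑ v, w v * SA p σ f v
      = (N r : ℝ) * ∑ v, w v * fld p σ v := by
  rw [Finset.sum_comm, Finset.mul_sum]
  refine Finset.sum_congr rfl fun v _ => ?_
  exact key_fld p σ _ _

/-- Master averaging lemma -/
lemma avg (c0 : Fin (r - 1) → Fin r → Fin 4 → ℝ)
    (c1 : Fin r → Fin (r - 1) → Fin 4 → ℝ)
    (c01 : Fin r → Fin r → Fin 4 → Fin 4 → ℝ)
    (d : ChimeraVertex r → ℝ)
    (Sopt : ChimeraVertex r → ℝ)
    (hmin : ∀ S : ChimeraVertex r → ℝ, IsPM S →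
      IsingH c0 c1 c01 d Sopt ≤ IsingH c0 c1 c01 d S)
    (hσ : ∀ v, σ v = 1 ∨ σ v = -1) :
    IsingH c0 c1 c01 d Sopt ≤
      (∑ i, ∑ j, ∑ k, c0 i j k * corr p σ (lowRow i, j, k, 0) (highRow i, j, k, 0))
      + (∑ i, ∑ j, ∑ k, c1 i j k * corr p σ (i, lowRow j, k, 1) (i, highRow j, k, 1))
      + (∑ i, ∑ j, ∑ k0, ∑ k1, c01 i j k0 k1 * corr p σ (i, j, k0, 0) (i, j, k1, 1))
      + (∑ v, d v * fld p σ v) := by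
  have hN : 0 < (N r : ℝ) := by
    have : 0 < N r := Fintype.card_pos
    exact_mod_cast this
  rw [← mul_le_mul_iff_of_pos_left hN]
  have hsum : ∑ f : ChimeraVertex r → Bool, IsingH c0 c1 c01 d (SA p σ f)
      = (N r : ℝ) * ((∑ i, ∑ j, ∑ k, c0 i j k * corr p σ (lowRow i, j, k, 0) (highRow i, j, k, 0))
      + (∑ i, ∑ j, ∑ k, c1 i j k * corr p σ (i, lowRow j, k, 1) (i, highRow j, k, 1))
      + (∑ i, ∑ j, ∑ k0, ∑ k1, c01 i j k0 k1 * corr p σ (i, j, k0, 0) (i, j, k1, 1))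
      + (∑ v, d v * fld p σ v)) := by
    unfold IsingH
    rw [Finset.sum_add_distrib, Finset.sum_add_distrib, Finset.sum_add_distrib]
    rw [swap3 p σ c0 (fun i j k => (lowRow i, j, k, 0)) (fun i j k => (highRow i, j, k, 0))]
    rw [swap3 p σ c1 (fun i j k => (i, lowRow j, k, 1)) (fun i j k => (i, highRow j, k, 1))]
    rw [swap4 p σ c01 (fun i j k0 k1 => (i, j, k0, 0)) (fun i j k0 k1 => (i, j, k1, 1))]
    rw [swap1 p σ d]
    ring
  calc (N r : ℝ) * IsingH c0 c1 c01 d Sopt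
      = ∑ _f : ChimeraVertex r → Bool, IsingH c0 c1 c01 d Sopt := by
        rw [Finset.sum_const, Finset.card_univ, nsmul_eq_mul]
    _ ≤ ∑ f : ChimeraVertex r → Bool, IsingH c0 c1 c01 d (SA p σ f) := by
        apply Finset.sum_le_sum
        intro f _
        exact hmin _ (SA_pm p σ hσ f)
    _ = _ := hsum

end Strat

namespace Strat
set_option linter.unusedSectionVars false
open Aux
variable {r : ℕ}
variable (c0 : Fin (r - 1) → Fin r → Fin 4 → ℝ)
    (c1 : Fin r → Fin (r - 1) → Fin 4 → ℝ)
    (c01 : Fin r → Fin r → Fin 4 → Fin 4 → ℝ)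
    (d : ChimeraVertex r → ℝ)

lemma low_ne_high (i : Fin (r - 1)) : lowRow i ≠ highRow i := by
  intro h
  have := congrArg Fin.val h
  simp only [lowRow, highRow] at this
  omega

def p01 (t : Fin 4) : ChimeraVertex r → Option (ChimeraVertex r) :=
  fun v => some (v.1, v.2.1, if v.2.2.2 = 0 then v.2.2.1 else v.2.2.1 - t, 0)

noncomputable def σ01 (t : Fin 4) : ChimeraVertex r → ℝ :=
  fun v => if v.2.2.2 = 1 then (if 0 ≤ c01 v.1 v.2.1 (v.2.2.1 - t) v.2.2.1 then -1 else 1) else 1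

lemma σ01_pm (t : Fin 4) : ∀ v, σ01 c01 t v = 1 ∨ σ01 c01 t v = -1 := by
  intro v
  unfold σ01
  by_cases h1 : v.2.2.2 = 1 <;> by_cases h2 : 0 ≤ c01 v.1 v.2.1 (v.2.2.1 - t) v.2.2.1 <;>
    simp [h1, h2]

lemma strat01 (Sopt : ChimeraVertex r → ℝ)
    (hmin : ∀ S : ChimeraVertex r → ℝ, IsPM S →
      IsingH c0 c1 c01 d Sopt ≤ IsingH c0 c1 c01 d S) (t : Fin 4) :
    IsingH c0 c1 c01 d Sopt ≤
      ∑ i, ∑ j, ∑ k0, ∑ k1, (if k1 - t = k0 then -|c01 i j k0 k1| else 0) := by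
  have h := avg (p01 t) (σ01 c01 t) c0 c1 c01 d Sopt hmin (σ01_pm c01 t)
  refine le_trans h (le_of_eq ?_)
  have h0 : ∀ i j k, corr (p01 t) (σ01 c01 t) ((lowRow i, j, k, 0) : ChimeraVertex r)
      (highRow i, j, k, 0) = 0 := by
    intro i j k
    unfold corr p01
    rw [if_neg]
    simp only [Option.some.injEq, Prod.mk.injEq]
    intro hcon
    exact low_ne_high i hcon.1
  have h1 : ∀ i j k, corr (p01 t) (σ01 c01 t) ((i, lowRow j, k, 1) : ChimeraVertex r)
      (i, highRow j, k, 1) = 0 := by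
    intro i j k
    unfold corr p01
    rw [if_neg]
    simp only [Option.some.injEq, Prod.mk.injEq]
    intro hcon
    exact low_ne_high j hcon.2.1
  have hf : ∀ v : ChimeraVertex r, fld (p01 t) (σ01 c01 t) v = 0 := by
    intro v
    unfold fld p01
    simp
  have h01 : ∀ (i j : Fin r) (k0 k1 : Fin 4),
      c01 i j k0 k1 * corr (p01 t) (σ01 c01 t) (i, j, k0, 0) (i, j, k1, 1)
        = if k1 - t = k0 then -|c01 i j k0 k1| else 0 := by
    intro i j k0 k1
    unfold corr p01 σ01
    simp only [show ((0:Fin 2) = 0) = True by simp, show ((1:Fin 2) = 0) = False by simp,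
      show ((0:Fin 2) = 1) = False by simp, show ((1:Fin 2) = 1) = True by simp,
      if_true, if_false, Option.some.injEq, Prod.mk.injEq, true_and, and_true]
    by_cases h : k1 - t = k0
    · rw [if_pos h.symm, if_pos h, h]
      by_cases hs : 0 ≤ c01 i j k0 k1
      · rw [if_pos hs, abs_of_nonneg hs]; ring
      · rw [if_neg hs, abs_of_neg (lt_of_not_ge hs)]; ring
    · rw [if_neg (fun hh => h hh.symm), if_neg h, mul_zero]
  simp only [h0, h1, hf, mul_zero, Finset.sum_const_zero, add_zero, zero_add]
  refine Finset.sum_congr rfl fun i _ => ?_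
  refine Finset.sum_congr rfl fun j _ => ?_
  refine Finset.sum_congr rfl fun k0 _ => ?_
  refine Finset.sum_congr rfl fun k1 _ => ?_
  exact h01 i j k0 k1

lemma strat01_total (Sopt : ChimeraVertex r → ℝ)
    (hmin : ∀ S : ChimeraVertex r → ℝ, IsPM S →
      IsingH c0 c1 c01 d Sopt ≤ IsingH c0 c1 c01 d S) :
    4 * IsingH c0 c1 c01 d Sopt ≤ -∑ i, ∑ j, ∑ k0, ∑ k1, |c01 i j k0 k1| := by
  have key : ∑ t : Fin 4, (∑ i, ∑ j, ∑ k0, ∑ k1,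
      (if k1 - t = k0 then -|c01 i j k0 k1| else 0))
      = -∑ i, ∑ j, ∑ k0, ∑ k1, |c01 i j k0 k1| := by
    rw [Finset.sum_comm, ← Finset.sum_neg_distrib]
    refine Finset.sum_congr rfl fun i _ => ?_
    rw [Finset.sum_comm, ← Finset.sum_neg_distrib]
    refine Finset.sum_congr rfl fun j _ => ?_
    rw [Finset.sum_comm, ← Finset.sum_neg_distrib]
    refine Finset.sum_congr rfl fun k0 _ => ?_
    rw [Finset.sum_comm, ← Finset.sum_neg_distrib]
    refine Finset.sum_congr rfl fun k1 _ => ?_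
    have hiff : ∀ t : Fin 4, (k1 - t = k0) = (t = k1 - k0) := by
      have : ∀ t k0 k1 : Fin 4, (k1 - t = k0) ↔ (t = k1 - k0) := by decide
      intro t; exact propext (this t k0 k1)
    simp only [hiff]
    rw [Finset.sum_ite_eq' Finset.univ (k1 - k0) (fun _ => -|c01 i j k0 k1|)]
    simp
  calc 4 * IsingH c0 c1 c01 d Sopt
      = ∑ _t : Fin 4, IsingH c0 c1 c01 d Sopt := by
        rw [Finset.sum_const, Finset.card_univ, Fintype.card_fin, nsmul_eq_mul]
        norm_num
    _ ≤ ∑ t : Fin 4, (∑ i, ∑ j, ∑ k0, ∑ k1,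
          (if k1 - t = k0 then -|c01 i j k0 k1| else 0)) :=
        Finset.sum_le_sum (fun t _ => strat01 c0 c1 c01 d Sopt hmin t)
    _ = _ := key

end Strat
namespace Strat
set_option linter.unusedSectionVars false
open Aux
variable {r : ℕ}
variable (c0 : Fin (r - 1) → Fin r → Fin 4 → ℝ)
    (c1 : Fin r → Fin (r - 1) → Fin 4 → ℝ)
    (c01 : Fin r → Fin r → Fin 4 → Fin 4 → ℝ)
    (d : ChimeraVertex r → ℝ)

def repv (b : ℕ) (i : Fin r) : Fin r :=
  ⟨i.val - ((i.val + b) % 2), by have := i.isLt; omega⟩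

lemma repv_cond (b : ℕ) (i : Fin (r - 1)) :
    (repv b (lowRow i) = repv b (highRow i)) ↔ (i.val + b) % 2 = 0 := by
  rw [Fin.ext_iff]
  simp only [repv, lowRow, highRow]
  have := i.isLt
  omega

def p0 (b : ℕ) : ChimeraVertex r → Option (ChimeraVertex r) :=
  fun v => if v.2.2.2 = 0 then some (repv b v.1, v.2.1, v.2.2.1, 0) else some v

noncomputable def σ0 (b : ℕ) : ChimeraVertex r → ℝ :=
  fun v => if h : v.2.2.2 = 0 ∧ (v.1.val + b) % 2 = 1 ∧ v.1.val - 1 < r - 1 then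
      (if 0 ≤ c0 ⟨v.1.val - 1, h.2.2⟩ v.2.1 v.2.2.1 then -1 else 1) else 1

lemma σ0_pm (b : ℕ) : ∀ v, σ0 c0 b v = 1 ∨ σ0 c0 b v = -1 := by
  intro v
  unfold σ0
  split
  · split
    · right; rfl
    · left; rfl
  · left; rfl

lemma strat0 (Sopt : ChimeraVertex r → ℝ)
    (hmin : ∀ S : ChimeraVertex r → ℝ, IsPM S →
      IsingH c0 c1 c01 d Sopt ≤ IsingH c0 c1 c01 d S) (b : ℕ) :
    IsingH c0 c1 c01 d Sopt ≤
      ∑ i, ∑ j, ∑ k, (if (i.val + b) % 2 = 0 then -|c0 i j k| else 0) := by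
  have h := avg (p0 b) (σ0 c0 b) c0 c1 c01 d Sopt hmin (σ0_pm c0 b)
  refine le_trans h (le_of_eq ?_)
  -- E_0 terms
  have h0 : ∀ (i : Fin (r-1)) (j : Fin r) (k : Fin 4),
      c0 i j k * corr (p0 b) (σ0 c0 b) (lowRow i, j, k, 0) (highRow i, j, k, 0)
        = if (i.val + b) % 2 = 0 then -|c0 i j k| else 0 := by
    intro i j k
    unfold corr
    have hpu : p0 b ((lowRow i, j, k, 0) : ChimeraVertex r)
        = some (repv b (lowRow i), j, k, 0) := by simp [p0]
    have hpv : p0 b ((highRow i, j, k, 0) : ChimeraVertex r)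
        = some (repv b (highRow i), j, k, 0) := by simp [p0]
    rw [hpu, hpv]
    by_cases hcond : (i.val + b) % 2 = 0
    · have hrep := (repv_cond b i).mpr hcond
      rw [if_pos (by rw [hrep]), if_pos hcond]
      have hu : σ0 c0 b ((lowRow i, j, k, 0) : ChimeraVertex r) = 1 := by
        unfold σ0
        rw [dif_neg]
        rintro ⟨-, h2, -⟩
        simp only [lowRow] at h2
        omega
      have hcv : ((0:Fin 2) = 0) ∧ ((highRow i : Fin r).val + b) % 2 = 1
          ∧ (highRow i : Fin r).val - 1 < r - 1 := by
        refine ⟨rfl, ?_, ?_⟩ <;> simp only [highRow]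
        · omega
        · have := i.isLt; omega
      have hv : σ0 c0 b ((highRow i, j, k, 0) : ChimeraVertex r)
          = if 0 ≤ c0 i j k then -1 else 1 := by
        unfold σ0
        rw [dif_pos hcv]
        have hfin : (⟨(highRow i : Fin r).val - 1, hcv.2.2⟩ : Fin (r-1)) = i := by
          apply Fin.ext; simp [highRow]
        rw [hfin]
      rw [hu, hv]
      by_cases hs : 0 ≤ c0 i j k
      · rw [if_pos hs, abs_of_nonneg hs]; ring
      · rw [if_neg hs, abs_of_neg (lt_of_not_ge hs)]; ring
    · rw [if_neg, if_neg hcond, mul_zero]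
      intro hcon
      simp only [Option.some.injEq, Prod.mk.injEq] at hcon
      exact hcond ((repv_cond b i).mp hcon.1)
  -- E_1 terms vanish
  have h1 : ∀ (i : Fin r) (j : Fin (r-1)) (k : Fin 4),
      corr (p0 b) (σ0 c0 b) ((i, lowRow j, k, 1) : ChimeraVertex r) (i, highRow j, k, 1) = 0 := by
    intro i j k
    unfold corr p0
    rw [if_neg]
    simp only [show ((1:Fin 2) = 0) = False by simp, if_false, Option.some.injEq,
      Prod.mk.injEq]
    rintro ⟨-, hcon, -⟩
    exact low_ne_high j hcon
  -- E_01 terms vanish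
  have h01 : ∀ (i j : Fin r) (k0 k1 : Fin 4),
      corr (p0 b) (σ0 c0 b) ((i, j, k0, 0) : ChimeraVertex r) (i, j, k1, 1) = 0 := by
    intro i j k0 k1
    unfold corr p0
    rw [if_neg]
    simp only [show ((1:Fin 2) = 0) = False by simp, show ((0:Fin 2) = 0) = True by simp,
      if_false, if_true, Option.some.injEq, Prod.mk.injEq]
    rintro ⟨-, -, -, hcon⟩
    exact absurd hcon (by simp)
  -- field terms vanish
  have hf : ∀ v : ChimeraVertex r, fld (p0 b) (σ0 c0 b) v = 0 := by
    intro v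
    unfold fld p0
    split <;> simp
  simp only [h1, h01, hf, mul_zero, Finset.sum_const_zero, add_zero]
  refine Finset.sum_congr rfl fun i _ => ?_
  refine Finset.sum_congr rfl fun j _ => ?_
  refine Finset.sum_congr rfl fun k _ => ?_
  exact h0 i j k

lemma strat0_total (Sopt : ChimeraVertex r → ℝ)
    (hmin : ∀ S : ChimeraVertex r → ℝ, IsPM S →
      IsingH c0 c1 c01 d Sopt ≤ IsingH c0 c1 c01 d S) :
    2 * IsingH c0 c1 c01 d Sopt ≤ -∑ i, ∑ j, ∑ k, |c0 i j k| := by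
  have hA := strat0 c0 c1 c01 d Sopt hmin 0
  have hB := strat0 c0 c1 c01 d Sopt hmin 1
  have hsum : (∑ i, ∑ j, ∑ k, (if (i.val + 0) % 2 = 0 then -|c0 i j k| else 0))
      + (∑ i, ∑ j, ∑ k, (if (i.val + 1) % 2 = 0 then -|c0 i j k| else 0))
      = -∑ i, ∑ j, ∑ k, |c0 i j k| := by
    rw [← Finset.sum_add_distrib, ← Finset.sum_neg_distrib]
    refine Finset.sum_congr rfl fun i _ => ?_
    rw [← Finset.sum_add_distrib, ← Finset.sum_neg_distrib]
    refine Finset.sum_congr rfl fun j _ => ?_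
    rw [← Finset.sum_add_distrib, ← Finset.sum_neg_distrib]
    refine Finset.sum_congr rfl fun k _ => ?_
    rcases Nat.mod_two_eq_zero_or_one i.val with h | h <;>
      simp [Nat.add_mod, h]
  linarith

end Strat
namespace Strat
set_option linter.unusedSectionVars false
open Aux
variable {r : ℕ}
variable (c0 : Fin (r - 1) → Fin r → Fin 4 → ℝ)
    (c1 : Fin r → Fin (r - 1) → Fin 4 → ℝ)
    (c01 : Fin r → Fin r → Fin 4 → Fin 4 → ℝ)
    (d : ChimeraVertex r → ℝ)

def p1 (b : ℕ) : ChimeraVertex r → Option (ChimeraVertex r) :=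
  fun v => if v.2.2.2 = 1 then some (v.1, repv b v.2.1, v.2.2.1, 1) else some v

noncomputable def σ1 (b : ℕ) : ChimeraVertex r → ℝ :=
  fun v => if h : v.2.2.2 = 1 ∧ (v.2.1.val + b) % 2 = 1 ∧ v.2.1.val - 1 < r - 1 then
      (if 0 ≤ c1 v.1 ⟨v.2.1.val - 1, h.2.2⟩ v.2.2.1 then -1 else 1) else 1

lemma σ1_pm (b : ℕ) : ∀ v, σ1 c1 b v = 1 ∨ σ1 c1 b v = -1 := by
  intro v
  unfold σ1
  split
  · split
    · right; rfl
    · left; rfl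
  · left; rfl

lemma strat1 (Sopt : ChimeraVertex r → ℝ)
    (hmin : ∀ S : ChimeraVertex r → ℝ, IsPM S →
      IsingH c0 c1 c01 d Sopt ≤ IsingH c0 c1 c01 d S) (b : ℕ) :
    IsingH c0 c1 c01 d Sopt ≤
      ∑ i, ∑ j : Fin (r-1), ∑ k, (if (j.val + b) % 2 = 0 then -|c1 i j k| else 0) := by
  have h := avg (p1 b) (σ1 c1 b) c0 c1 c01 d Sopt hmin (σ1_pm c1 b)
  refine le_trans h (le_of_eq ?_)
  -- E_1 terms
  have h1 : ∀ (i : Fin r) (j : Fin (r-1)) (k : Fin 4),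
      c1 i j k * corr (p1 b) (σ1 c1 b) (i, lowRow j, k, 1) (i, highRow j, k, 1)
        = if (j.val + b) % 2 = 0 then -|c1 i j k| else 0 := by
    intro i j k
    unfold corr
    have hpu : p1 b ((i, lowRow j, k, 1) : ChimeraVertex r)
        = some (i, repv b (lowRow j), k, 1) := by simp [p1]
    have hpv : p1 b ((i, highRow j, k, 1) : ChimeraVertex r)
        = some (i, repv b (highRow j), k, 1) := by simp [p1]
    rw [hpu, hpv]
    by_cases hcond : (j.val + b) % 2 = 0
    · have hrep := (repv_cond b j).mpr hcond
      rw [if_pos (by rw [hrep]), if_pos hcond]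
      have hu : σ1 c1 b ((i, lowRow j, k, 1) : ChimeraVertex r) = 1 := by
        unfold σ1
        rw [dif_neg]
        rintro ⟨-, h2, -⟩
        simp only [lowRow] at h2
        omega
      have hcv : ((1:Fin 2) = 1) ∧ ((highRow j : Fin r).val + b) % 2 = 1
          ∧ (highRow j : Fin r).val - 1 < r - 1 := by
        refine ⟨rfl, ?_, ?_⟩ <;> simp only [highRow]
        · omega
        · have := j.isLt; omega
      have hv : σ1 c1 b ((i, highRow j, k, 1) : ChimeraVertex r)
          = if 0 ≤ c1 i j k then -1 else 1 := by
        unfold σ1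
        rw [dif_pos hcv]
        have hfin : (⟨(highRow j : Fin r).val - 1, hcv.2.2⟩ : Fin (r-1)) = j := by
          apply Fin.ext; simp [highRow]
        rw [hfin]
      rw [hu, hv]
      by_cases hs : 0 ≤ c1 i j k
      · rw [if_pos hs, abs_of_nonneg hs]; ring
      · rw [if_neg hs, abs_of_neg (lt_of_not_ge hs)]; ring
    · rw [if_neg, if_neg hcond, mul_zero]
      intro hcon
      simp only [Option.some.injEq, Prod.mk.injEq] at hcon
      exact hcond ((repv_cond b j).mp hcon.2.1)
  -- E_0 terms vanish
  have h0 : ∀ (i : Fin (r-1)) (j : Fin r) (k : Fin 4),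
      corr (p1 b) (σ1 c1 b) ((lowRow i, j, k, 0) : ChimeraVertex r) (highRow i, j, k, 0)
        = 0 := by
    intro i j k
    unfold corr p1
    rw [if_neg]
    simp only [show ((0:Fin 2) = 1) = False by simp, if_false, Option.some.injEq,
      Prod.mk.injEq]
    rintro ⟨hcon, -⟩
    exact low_ne_high i hcon
  -- E_01 terms vanish
  have h01 : ∀ (i j : Fin r) (k0 k1 : Fin 4),
      corr (p1 b) (σ1 c1 b) ((i, j, k0, 0) : ChimeraVertex r) (i, j, k1, 1) = 0 := by
    intro i j k0 k1
    unfold corr p1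
    rw [if_neg]
    simp only [show ((1:Fin 2) = 1) = True by simp, show ((0:Fin 2) = 1) = False by simp,
      if_false, if_true, Option.some.injEq, Prod.mk.injEq]
    rintro ⟨-, -, -, hcon⟩
    exact absurd hcon (by simp)
  -- field terms vanish
  have hf : ∀ v : ChimeraVertex r, fld (p1 b) (σ1 c1 b) v = 0 := by
    intro v
    unfold fld p1
    split <;> simp
  simp only [h0, h01, hf, mul_zero, Finset.sum_const_zero, add_zero, zero_add]
  refine Finset.sum_congr rfl fun i _ => ?_
  refine Finset.sum_congr rfl fun j _ => ?_
  refine Finset.sum_congr rfl fun k _ => ?_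
  exact h1 i j k

lemma strat1_total (Sopt : ChimeraVertex r → ℝ)
    (hmin : ∀ S : ChimeraVertex r → ℝ, IsPM S →
      IsingH c0 c1 c01 d Sopt ≤ IsingH c0 c1 c01 d S) :
    2 * IsingH c0 c1 c01 d Sopt ≤ -∑ i, ∑ j, ∑ k, |c1 i j k| := by
  have hA := strat1 c0 c1 c01 d Sopt hmin 0
  have hB := strat1 c0 c1 c01 d Sopt hmin 1
  have hsum : (∑ i, ∑ j : Fin (r-1), ∑ k, (if (j.val + 0) % 2 = 0 then -|c1 i j k| else 0))
      + (∑ i, ∑ j : Fin (r-1), ∑ k, (if (j.val + 1) % 2 = 0 then -|c1 i j k| else 0))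
      = -∑ i, ∑ j, ∑ k, |c1 i j k| := by
    rw [← Finset.sum_add_distrib, ← Finset.sum_neg_distrib]
    refine Finset.sum_congr rfl fun i _ => ?_
    rw [← Finset.sum_add_distrib, ← Finset.sum_neg_distrib]
    refine Finset.sum_congr rfl fun j _ => ?_
    rw [← Finset.sum_add_distrib, ← Finset.sum_neg_distrib]
    refine Finset.sum_congr rfl fun k _ => ?_
    rcases Nat.mod_two_eq_zero_or_one j.val with h | h <;>
      simp [Nat.add_mod, h]
  linarith

end Strat
namespace Strat
set_option linter.unusedSectionVars false
open Aux
variable {r : ℕ}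
variable (c0 : Fin (r - 1) → Fin r → Fin 4 → ℝ)
    (c1 : Fin r → Fin (r - 1) → Fin 4 → ℝ)
    (c01 : Fin r → Fin r → Fin 4 → Fin 4 → ℝ)
    (d : ChimeraVertex r → ℝ)

def beta (v : ChimeraVertex r) : ℕ := (v.1.val + v.2.1.val + v.2.2.2.val) % 2

def pF (b : ℕ) : ChimeraVertex r → Option (ChimeraVertex r) :=
  fun v => if beta v = b then none else some v

noncomputable def σF : ChimeraVertex r → ℝ :=
  fun v => if 0 ≤ d v then -1 else 1

lemma σF_pm : ∀ v, σF d v = 1 ∨ σF d v = -1 := by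
  intro v
  unfold σF
  split
  · right; rfl
  · left; rfl

lemma corrF_ne (b : ℕ) (σ : ChimeraVertex r → ℝ) (u v : ChimeraVertex r)
    (hβ : beta u ≠ beta v) (huv : u ≠ v) : corr (pF b) σ u v = 0 := by
  unfold corr pF
  rw [if_neg]
  by_cases hu : beta u = b <;> by_cases hv : beta v = b
  · exact absurd (hu.trans hv.symm) hβ
  · simp [hu, hv]
  · simp [hu, hv]
  · simp [hu, hv, huv]

lemma stratF (Sopt : ChimeraVertex r → ℝ)
    (hmin : ∀ S : ChimeraVertex r → ℝ, IsPM S →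
      IsingH c0 c1 c01 d Sopt ≤ IsingH c0 c1 c01 d S) (b : ℕ) :
    IsingH c0 c1 c01 d Sopt ≤ ∑ v, (if beta v = b then -|d v| else 0) := by
  have h := avg (pF b) (σF d) c0 c1 c01 d Sopt hmin (σF_pm d)
  refine le_trans h (le_of_eq ?_)
  have h0 : ∀ (i : Fin (r-1)) (j : Fin r) (k : Fin 4),
      corr (pF b) (σF d) ((lowRow i, j, k, 0) : ChimeraVertex r) (highRow i, j, k, 0)
        = 0 := by
    intro i j k
    apply corrF_ne
    · unfold beta
      simp only [lowRow, highRow]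
      omega
    · intro hcon
      exact low_ne_high i (congrArg Prod.fst hcon)
  have h1 : ∀ (i : Fin r) (j : Fin (r-1)) (k : Fin 4),
      corr (pF b) (σF d) ((i, lowRow j, k, 1) : ChimeraVertex r) (i, highRow j, k, 1)
        = 0 := by
    intro i j k
    apply corrF_ne
    · unfold beta
      simp only [lowRow, highRow]
      omega
    · intro hcon
      exact low_ne_high j (congrArg (fun w => w.2.1) hcon)
  have h01 : ∀ (i j : Fin r) (k0 k1 : Fin 4),
      corr (pF b) (σF d) ((i, j, k0, 0) : ChimeraVertex r) (i, j, k1, 1) = 0 := by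
    intro i j k0 k1
    apply corrF_ne
    · unfold beta
      simp only [show ((0:Fin 2)).val = 0 from rfl, show ((1:Fin 2)).val = 1 from rfl]
      omega
    · intro hcon
      have := congrArg (fun w => w.2.2.2) hcon
      simp at this
  have hfld : ∀ v : ChimeraVertex r, d v * fld (pF b) (σF d) v
      = if beta v = b then -|d v| else 0 := by
    intro v
    unfold fld pF σF
    by_cases hv : beta v = b
    · by_cases hs : 0 ≤ d v
      · simp only [hv, if_true, reduceIte, if_pos hs, abs_of_nonneg hs]
        ring
      · simp only [hv, if_true, reduceIte, if_neg hs, abs_of_neg (lt_of_not_ge hs)]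
        ring
    · simp [hv]
  simp only [h0, h1, h01, hfld, mul_zero, Finset.sum_const_zero, add_zero, zero_add]

lemma stratF_total (Sopt : ChimeraVertex r → ℝ)
    (hmin : ∀ S : ChimeraVertex r → ℝ, IsPM S →
      IsingH c0 c1 c01 d Sopt ≤ IsingH c0 c1 c01 d S) :
    2 * IsingH c0 c1 c01 d Sopt ≤ -∑ v, |d v| := by
  have hA := stratF c0 c1 c01 d Sopt hmin 0
  have hB := stratF c0 c1 c01 d Sopt hmin 1
  have hsum : (∑ v, (if beta v = 0 then -|d v| else 0))
      + (∑ v, (if beta v = 1 then -|d v| else 0)) = -∑ v : ChimeraVertex r, |d v| := by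
    rw [← Finset.sum_add_distrib, ← Finset.sum_neg_distrib]
    refine Finset.sum_congr rfl fun v _ => ?_
    rcases Nat.mod_two_eq_zero_or_one (v.1.val + v.2.1.val + v.2.2.2.val) with h | h <;>
      simp [beta, h]
  linarith

end Strat

set_option maxHeartbeats 1000000 in
/-- Theorem 2: with `C = ln(1+√2)/π`, the minimum value `H*` of the Ising
Hamiltonian on the Chimera graph satisfies
`H* ≤ -(C/(3C+4)) · (Σ_{(u,v)∈E} |c_uv| + Σ_{u∈V} |d_u|)`. -/
theorem stmt9 (r : ℕ) (hr : 1 ≤ r)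
    (c0 : Fin (r - 1) → Fin r → Fin 4 → ℝ)
    (c1 : Fin r → Fin (r - 1) → Fin 4 → ℝ)
    (c01 : Fin r → Fin r → Fin 4 → Fin 4 → ℝ)
    (d : ChimeraVertex r → ℝ)
    (Sopt : ChimeraVertex r → ℝ) (hSopt : IsPM Sopt)
    (hmin : ∀ S : ChimeraVertex r → ℝ, IsPM S →
      IsingH c0 c1 c01 d Sopt ≤ IsingH c0 c1 c01 d S) :
    IsingH c0 c1 c01 d Sopt ≤
      -(Real.log (1 + Real.sqrt 2) / Real.pi /
          (3 * (Real.log (1 + Real.sqrt 2) / Real.pi) + 4)) *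
        ((∑ i, ∑ j, ∑ k, |c0 i j k|) + (∑ i, ∑ j, ∑ k, |c1 i j k|)
          + (∑ i, ∑ j, ∑ k0, ∑ k1, |c01 i j k0 k1|) + (∑ v, |d v|)) := by
  have h0 := Strat.strat0_total c0 c1 c01 d Sopt hmin
  have h1 := Strat.strat1_total c0 c1 c01 d Sopt hmin
  have h01 := Strat.strat01_total c0 c1 c01 d Sopt hmin
  have hF := Strat.stratF_total c0 c1 c01 d Sopt hmin
  set A0 := ∑ i, ∑ j, ∑ k, |c0 i j k| with hA0def
  set A1 := ∑ i, ∑ j, ∑ k, |c1 i j k| with hA1def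
  set A01 := ∑ i, ∑ j, ∑ k0, ∑ k1, |c01 i j k0 k1| with hA01def
  set Ad := ∑ v, |d v| with hAddef
  have hA0 : 0 ≤ A0 := by positivity
  have hA1 : 0 ≤ A1 := by positivity
  have hA01 : 0 ≤ A01 := by positivity
  have hAd : 0 ≤ Ad := by positivity
  set Hs := IsingH c0 c1 c01 d Sopt with hHsdef
  have hten : 10 * Hs ≤ -(A0 + A1 + A01 + Ad) := by linarith
  -- the constant
  set L := Real.log (1 + Real.sqrt 2) with hLdef
  have hs2 : Real.sqrt 2 < 1.5 := by
    rw [show (1.5:ℝ) = 1.5 from rfl]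
    have := Real.sq_sqrt (by norm_num : (0:ℝ) ≤ 2)
    nlinarith [Real.sqrt_nonneg 2]
  have hL0 : 0 ≤ L := by
    rw [hLdef]
    apply Real.log_nonneg
    nlinarith [Real.sqrt_nonneg 2]
  have hL1 : L ≤ 1 := by
    rw [hLdef]
    have hlt : (1:ℝ) + Real.sqrt 2 < Real.exp 1 := by
      have := Real.exp_one_gt_d9
      nlinarith
    have := Real.log_lt_log (by positivity) hlt
    rw [Real.log_exp] at this
    linarith
  set C := L / Real.pi with hCdef
  have hC0 : 0 ≤ C := div_nonneg hL0 Real.pi_pos.le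
  have hC47 : C ≤ 4 / 7 := by
    rw [hCdef, div_le_div_iff₀ Real.pi_pos (by norm_num : (0:ℝ) < 7)]
    nlinarith [Real.pi_gt_three]
  have hden : (0:ℝ) < 3 * C + 4 := by linarith
  have hε : C / (3 * C + 4) ≤ 1 / 10 := by
    rw [div_le_div_iff₀ hden (by norm_num : (0:ℝ) < 10)]
    linarith
  have hε0 : 0 ≤ C / (3 * C + 4) := div_nonneg hC0 hden.le
  have hW : 0 ≤ A0 + A1 + A01 + Ad := by linarith
  have hmul : C / (3 * C + 4) * (A0 + A1 + A01 + Ad)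
      ≤ 1 / 10 * (A0 + A1 + A01 + Ad) :=
    mul_le_mul_of_nonneg_right hε hW
  linarith
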